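/- Let T ⊆ {1,…,n} with |T| = K, δ_K < 1, y = Φx + v with supp(x) = T, and define x̂ supported on T by x̂_T = Φ_T^† y. Then ‖x̂ − x‖₂ ≤ ‖v‖₂/√(1−δ_K). -/

import Mathlib

open Finset Matrix

/-- Squared-entries `ℓ₂` norm of a finite real vector. -/
noncomputable def l2 {ι : Type*} [Fintype ι] (x : ι → ℝ) : ℝ :=
  Real.sqrt (∑ i, x i ^ 2)

/-- A vector is `K`-sparse if it has at most `K` nonzero entries. -/
def Ksparse {n : ℕ} (K : ℕ) (x : Fin n → ℝ) : Prop :=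
  (Finset.univ.filter (fun i => x i ≠ 0)).card ≤ K

/-- `δ` is a valid restricted isometry constant of order `K` for `Φ`. -/
def RIP {m n : ℕ} (Φ : Matrix (Fin m) (Fin n) ℝ) (K : ℕ) (δ : ℝ) : Prop :=
  ∀ x : Fin n → ℝ, Ksparse K x →
    (1 - δ) * ∑ i, x i ^ 2 ≤ ∑ i, (Φ.mulVec x) i ^ 2 ∧
    ∑ i, (Φ.mulVec x) i ^ 2 ≤ (1 + δ) * ∑ i, x i ^ 2

/-- Column submatrix `Φ_S`. -/
def colSub {m n : ℕ} (Φ : Matrix (Fin m) (Fin n) ℝ) (S : Finset (Fin n)) :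
    Matrix (Fin m) S ℝ := fun r c => Φ r c

/-- Gram matrix `Φ_S' Φ_S`. -/
noncomputable def gram {m n : ℕ} (Φ : Matrix (Fin m) (Fin n) ℝ) (S : Finset (Fin n)) :
    Matrix S S ℝ := (colSub Φ S)ᵀ * colSub Φ S

/-- Pseudoinverse `Φ_S^† = (Φ_S'Φ_S)⁻¹ Φ_S'` (for `Φ_S` of full column rank). -/
noncomputable def pinv {m n : ℕ} (Φ : Matrix (Fin m) (Fin n) ℝ) (S : Finset (Fin n)) :
    Matrix S (Fin m) ℝ := (gram Φ S)⁻¹ * (colSub Φ S)ᵀ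

/-- Projection `P_S = Φ_S Φ_S^†` onto the span of the columns of `Φ_S`. -/
noncomputable def proj {m n : ℕ} (Φ : Matrix (Fin m) (Fin n) ℝ) (S : Finset (Fin n)) :
    Matrix (Fin m) (Fin m) ℝ := colSub Φ S * pinv Φ S

/-- Projection `P_S^⊥ = I - P_S`. -/
noncomputable def projPerp {m n : ℕ} (Φ : Matrix (Fin m) (Fin n) ℝ) (S : Finset (Fin n)) :
    Matrix (Fin m) (Fin m) ℝ := 1 - proj Φ S

/-- Extension of a vector on `T` by zero. -/
def extT {n : ℕ} (T : Finset (Fin n)) (z : T → ℝ) : Fin n → ℝ :=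
  fun i => if h : i ∈ T then z ⟨i, h⟩ else 0

lemma sum_sq_extT {n : ℕ} (T : Finset (Fin n)) (z : T → ℝ) :
    ∑ i, extT T z i ^ 2 = ∑ j : T, z j ^ 2 := by
  rw [← Finset.sum_subset T.subset_univ (fun i _ hi => by simp [extT, hi]),
      ← Finset.sum_attach T (fun i => extT T z i ^ 2), Finset.univ_eq_attach]
  exact Finset.sum_congr rfl fun j _ => by simp [extT, j.2]

lemma mulVec_extT {m n : ℕ} (Φ : Matrix (Fin m) (Fin n) ℝ) (T : Finset (Fin n)) (z : T → ℝ) :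
    Φ.mulVec (extT T z) = (colSub Φ T).mulVec z := by
  funext r
  simp only [Matrix.mulVec, dotProduct]
  rw [← Finset.sum_subset T.subset_univ (fun i _ hi => by simp [extT, hi]),
      ← Finset.sum_attach T (fun i => Φ r i * extT T z i), Finset.univ_eq_attach]
  exact Finset.sum_congr rfl fun j _ => by simp [extT, colSub, j.2]

lemma gram_dot {m n : ℕ} (Φ : Matrix (Fin m) (Fin n) ℝ) (T : Finset (Fin n)) (z w : T → ℝ) :
    z ⬝ᵥ (gram Φ T).mulVec w = ((colSub Φ T).mulVec z) ⬝ᵥ ((colSub Φ T).mulVec w) := by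
  rw [_root_.gram, ← Matrix.mulVec_mulVec, Matrix.dotProduct_mulVec, Matrix.vecMul_transpose]

/-- Least-squares estimate on the true support: `‖x̂ - x‖₂ ≤ ‖v‖₂/√(1-δ_K)`. -/
theorem ls_on_true_support_error {m n : ℕ} (Φ : Matrix (Fin m) (Fin n) ℝ) (K : ℕ)
    (T : Finset (Fin n)) (hT : T.card = K)
    (δ : ℝ) (hδ0 : 0 ≤ δ) (hδ1 : δ < 1) (hRIP : RIP Φ K δ)
    (x : Fin n → ℝ) (v y : Fin m → ℝ)
    (hsupp : ∀ i, i ∉ T → x i = 0) (hy : y = Φ.mulVec x + v)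
    (xhat : Fin n → ℝ) (hxhsupp : ∀ i, i ∉ T → xhat i = 0)
    (hxh : ∀ j : T, xhat j = (pinv Φ T).mulVec y j) :
    l2 (fun i => xhat i - x i) ≤ l2 v / Real.sqrt (1 - δ) := by
  have h1δ : 0 < 1 - δ := by linarith
  set A := colSub Φ T with hA
  set G := gram Φ T with hG
  -- RIP lower bound for vectors supported on T
  have lower : ∀ z : T → ℝ, (1 - δ) * ∑ j, z j ^ 2 ≤ ∑ i, (A.mulVec z) i ^ 2 := by
    intro z
    have hks : Ksparse K (extT T z) := by
      have hsub : (Finset.univ.filter (fun i => extT T z i ≠ 0)) ⊆ T := by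
        intro i hi
        simp only [Finset.mem_filter] at hi
        by_contra hiT
        exact hi.2 (by simp [extT, hiT])
      calc (Finset.univ.filter (fun i => extT T z i ≠ 0)).card ≤ T.card :=
            Finset.card_le_card hsub
        _ = K := hT
    have h := (hRIP (extT T z) hks).1
    rwa [sum_sq_extT, mulVec_extT] at h
  have sumsq_dot : ∀ u : Fin m → ℝ, ∑ i, u i ^ 2 = u ⬝ᵥ u := by
    intro u; simp [dotProduct, sq]
  -- the Gram matrix is invertible
  have hdet : IsUnit G.det := by
    rw [isUnit_iff_ne_zero]
    intro hdet0
    obtain ⟨z, hz, hGz⟩ := Matrix.exists_mulVec_eq_zero_iff.mpr hdet0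
    have h0 : ∑ i, (A.mulVec z) i ^ 2 = 0 := by
      rw [sumsq_dot, ← gram_dot, ← hG, hGz, dotProduct_zero]
    have hzz : ∑ j, z j ^ 2 ≤ 0 := by nlinarith [lower z]
    refine hz (funext fun j => ?_)
    have hnn : ∀ j ∈ Finset.univ, (0:ℝ) ≤ z j ^ 2 := fun _ _ => sq_nonneg _
    have h0' := (Finset.sum_eq_zero_iff_of_nonneg hnn).1
      (le_antisymm hzz (Finset.sum_nonneg hnn)) j (Finset.mem_univ j)
    exact pow_eq_zero_iff (two_ne_zero) |>.1 h0'
  have hGinv' : G * G⁻¹ = 1 := Matrix.mul_nonsing_inv _ hdet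
  -- the error vector on T
  set e : T → ℝ := fun j => xhat j - x j with he
  set xT : T → ℝ := fun j => x j with hxT
  have hxext : x = extT T xT := by
    funext i
    by_cases hi : i ∈ T
    · simp [extT, hi, hxT]
    · simp [extT, hi, hsupp i hi]
  have hPhix : Φ.mulVec x = A.mulVec xT := by rw [hxext, mulVec_extT]
  have heeq : e = (G⁻¹ * Aᵀ).mulVec y - xT := by
    funext j
    have := hxh j
    simp only [pinv, ← hA, ← hG] at this
    simp [he, this, hxT]
  have hGe : G.mulVec e = Aᵀ.mulVec v := by
    rw [heeq, Matrix.mulVec_sub, Matrix.mulVec_mulVec, ← Matrix.mul_assoc, hGinv',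
        Matrix.one_mul, hy, hPhix, Matrix.mulVec_add, Matrix.mulVec_mulVec]
    have hAG : Aᵀ * A = G := by rw [hG, _root_.gram, hA]
    rw [hAG]
    abel
  -- the key estimates
  set P := ∑ i, (A.mulVec e) i ^ 2 with hP
  set V := ∑ i, v i ^ 2 with hV
  have hPnn : 0 ≤ P := Finset.sum_nonneg fun _ _ => sq_nonneg _
  have hVnn : 0 ≤ V := Finset.sum_nonneg fun _ _ => sq_nonneg _
  have hPdot : P = (A.mulVec e) ⬝ᵥ v := by
    rw [hP, sumsq_dot, ← gram_dot, ← hG, hGe, Matrix.dotProduct_mulVec,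
        Matrix.vecMul_transpose]
  have hCS : P ^ 2 ≤ P * V := by
    have := Finset.sum_mul_sq_le_sq_mul_sq Finset.univ (fun i => (A.mulVec e) i) v
    calc P ^ 2 = (∑ i, (A.mulVec e) i * v i) ^ 2 := by rw [hPdot]; rfl
      _ ≤ P * V := by simpa [hP, hV] using this
  have hPV : P ≤ V := by
    rcases eq_or_lt_of_le hPnn with h | h
    · rw [← h]; exact hVnn
    · nlinarith
  have hE : (1 - δ) * ∑ j, e j ^ 2 ≤ V := le_trans (lower e) hPV
  -- conclude
  have hfun : (fun i => xhat i - x i) = extT T e := by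
    funext i
    by_cases hi : i ∈ T
    · simp [extT, hi, he]
    · simp [extT, hi, hsupp i hi, hxhsupp i hi]
  rw [hfun, l2, l2, sum_sq_extT, ← hV, ← Real.sqrt_div hVnn]
  apply Real.sqrt_le_sqrt
  rw [le_div_iff₀ h1δ]
  linarith
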